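/- Let B be a block of positive integers of length n. The number of indices i in [0,n] such that both q_i(B) < √(q(B)) and q_{n−i}(B*) < √(q(B)) hold is at most 2. -/

import Mathlib

/-- The value `[0; a₁, …, aₙ]` of a finite block of positive integer CF digits. -/
def cfVal : List ℕ+ → ℚ
  | [] => 0
  | a :: t => 1 / (((a : ℕ) : ℚ) + cfVal t)

/-- `qI B i = q_i(B)`: the denominator of the `i`-th convergent of the block `B`. -/
def qI (B : List ℕ+) (i : ℕ) : ℕ := (cfVal (B.take i)).den

/-- The continuant. -/
def Kc : List ℕ+ → ℕ
  | [] => 1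
  | [a] => a
  | a :: b :: t => a * Kc (b :: t) + Kc t

def Hc : List ℕ+ → ℕ
  | [] => 0
  | _ :: t => Kc t

def Gc : List ℕ+ → ℕ
  | [] => 0
  | a :: t => Kc ((a :: t).dropLast)

lemma Kc_pos : ∀ L, 0 < Kc L
  | [] => Nat.one_pos
  | [a] => a.pos
  | a :: b :: t => by
    have := Kc_pos t
    simp [Kc]; omega

lemma Kc_cons (a : ℕ+) (t : List ℕ+) : Kc (a :: t) = a * Kc t + Hc t := by
  cases t <;> simp [Kc, Hc]

lemma Kc_le_cons (a : ℕ+) (t : List ℕ+) : Kc t ≤ Kc (a :: t) := by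
  rw [Kc_cons]
  have ha : 1 ≤ (a : ℕ) := a.pos
  nlinarith [Kc_pos t, Nat.zero_le (Hc t)]

lemma Hc_le (L : List ℕ+) : Hc L ≤ Kc L := by
  cases L with
  | nil => simp [Hc, Kc]
  | cons a t => simpa [Hc] using Kc_le_cons a t

lemma Kc_coprime : ∀ L, Nat.Coprime (Kc L) (Hc L)
  | [] => by simp [Kc, Hc, Nat.Coprime]
  | a :: t => by
    have ih := (Kc_coprime t).symm
    rw [Kc_cons]
    show Nat.Coprime (↑a * Kc t + Hc t) (Kc t)
    rw [add_comm]
    exact (Nat.coprime_add_mul_right_left (Hc t) (Kc t) a).mpr ih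

lemma cfVal_eq : ∀ L, cfVal L = (Hc L : ℚ) / (Kc L)
  | [] => by simp [cfVal, Hc]
  | a :: t => by
    have ih := cfVal_eq t
    have hKt : (0:ℚ) < (Kc t : ℚ) := by exact_mod_cast Kc_pos t
    have ha : (0:ℚ) < ((a:ℕ):ℚ) := by exact_mod_cast a.pos
    have hHt : (0:ℚ) ≤ (Hc t : ℚ) := by positivity
    rw [cfVal, ih, Kc_cons]
    show (1:ℚ) / (((a:ℕ):ℚ) + (Hc t : ℚ) / (Kc t : ℚ))
        = ((Kc t : ℕ) : ℚ) / (((a : ℕ) * Kc t + Hc t : ℕ) : ℚ)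
    have h1 : (0:ℚ) < ((a:ℕ):ℚ) + (Hc t : ℚ) / (Kc t : ℚ) := by positivity
    have h2 : (0:ℚ) < (((a : ℕ) * Kc t + Hc t : ℕ) : ℚ) := by
      push_cast; positivity
    rw [div_eq_div_iff h1.ne' h2.ne']
    push_cast
    field_simp

lemma den_cfVal (L : List ℕ+) : (cfVal L).den = Kc L := by
  rw [cfVal_eq]
  have h := Rat.den_div_eq_of_coprime (a := (Hc L : ℤ)) (b := (Kc L : ℤ))
    (by exact_mod_cast Kc_pos L) (by simpa [Int.natAbs_natCast] using (Kc_coprime L).symm)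
  have : ((Hc L : ℤ) : ℚ) / ((Kc L : ℤ) : ℚ) = (Hc L : ℚ) / (Kc L : ℚ) := by push_cast; ring
  rw [this] at h
  exact_mod_cast h

lemma qI_eq (B : List ℕ+) (i : ℕ) : qI B i = Kc (B.take i) := den_cfVal _

lemma Gc_cons2 (a b : ℕ+) (t : List ℕ+) :
    Gc (a :: b :: t) = a * Gc (b :: t) + Gc t := by
  cases t with
  | nil => simp [Gc, Kc]
  | cons c s =>
    show Kc ((a :: b :: c :: s).dropLast) = a * Kc ((b :: c :: s).dropLast) + Kc ((c :: s).dropLast)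
    rw [List.dropLast_cons₂, List.dropLast_cons₂]
    rw [show Kc (a :: b :: (c::s).dropLast) = a * Kc (b :: (c::s).dropLast) + Kc ((c::s).dropLast) from rfl]

lemma Kc_append : ∀ L M, Kc (L ++ M) = Kc L * Kc M + Gc L * Hc M
  | [], M => by simp [Kc, Gc]
  | [a], M => by
    show Kc (a :: M) = Kc [a] * Kc M + Gc [a] * Hc M
    rw [Kc_cons]
    simp [Kc, Gc]
  | a :: b :: t, M => by
    have ih1 := Kc_append (b :: t) M
    have ih2 := Kc_append t M
    show Kc (a :: b :: (t ++ M)) = Kc (a :: b :: t) * Kc M + Gc (a :: b :: t) * Hc M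
    rw [show Kc (a :: b :: (t ++ M)) = a * Kc (b :: (t ++ M)) + Kc (t ++ M) from rfl,
      show Kc (a :: b :: t) = a * Kc (b :: t) + Kc t from rfl, Gc_cons2,
      show Kc (b :: (t ++ M)) = Kc ((b :: t) ++ M) from rfl, ih1, ih2]
    ring

lemma Kc_reverse : ∀ L, Kc L.reverse = Kc L
  | [] => rfl
  | a :: t => by
    have ih := Kc_reverse t
    have hGr : Gc t.reverse = Hc t := by
      cases t with
      | nil => rfl
      | cons c s =>
        have hne : (c :: s).reverse ≠ [] := by simp
        obtain ⟨x, l, hxl⟩ : ∃ x l, (c :: s).reverse = x :: l := by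
          cases h : (c :: s).reverse with
          | nil => exact absurd h hne
          | cons x l => exact ⟨x, l, rfl⟩
        have := Kc_reverse s
        rw [hxl]
        show Kc ((x :: l).dropLast) = Kc s
        rw [← hxl, List.dropLast_reverse]
        show Kc s.reverse = Kc s
        exact this
    rw [show (a :: t).reverse = t.reverse ++ [a] from by simp,
      Kc_append, ih, hGr]
    have e1 : Kc [a] = (a : ℕ) := rfl
    have e2 : Hc [a] = 1 := rfl
    rw [e1, e2, Kc_cons]
    ring
termination_by L => L.length
decreasing_by all_goals (simp_all [List.length_cons]; try omega)

lemma Kc_two_le {M : List ℕ+} (h : 2 ≤ M.length) : 2 ≤ Kc M := by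
  match M, h with
  | a :: b :: t, _ =>
    show 2 ≤ a * Kc (b :: t) + Kc t
    have h1 := Kc_pos (b :: t)
    have h2 := Kc_pos t
    have ha : 1 ≤ (a : ℕ) := a.pos
    nlinarith

lemma Kc_le_append (L M : List ℕ+) : Kc L ≤ Kc (L ++ M) := by
  rw [Kc_append]
  nlinarith [Kc_pos M, Kc_pos L, Nat.zero_le (Gc L * Hc M)]

lemma Kc_double {L M : List ℕ+} (h : 2 ≤ M.length) : 2 * Kc L ≤ Kc (L ++ M) := by
  rw [Kc_append]
  have := Kc_two_le h
  nlinarith [Kc_pos L, Nat.zero_le (Gc L * Hc M)]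

lemma Gc_le (L : List ℕ+) : Gc L ≤ Kc L := by
  cases L with
  | nil => simp [Gc, Kc]
  | cons a t =>
    show Kc ((a :: t).dropLast) ≤ Kc (a :: t)
    conv_rhs => rw [← List.dropLast_append_getLast (l := a :: t) (by simp)]
    exact Kc_le_append _ _

/-- The number of indices `i ∈ [0, n]` with both `q_i(B) < √(q(B))` and
`q_{n−i}(B*) < √(q(B))` is at most `2`.  (For naturals, `x < √y ↔ x² < y`.) -/
theorem cf_few_small_split_points (B : List ℕ+) :
    ((Finset.range (B.length + 1)).filter
      (fun i => (qI B i) ^ 2 < qI B B.length ∧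
        (qI B.reverse (B.length - i)) ^ 2 < qI B B.length)).card ≤ 2 := by
  set n := B.length with hn
  set S := (Finset.range (n + 1)).filter
      (fun i => (qI B i) ^ 2 < qI B n ∧
        (qI B.reverse (n - i)) ^ 2 < qI B n) with hS
  have hq : qI B n = Kc B := by rw [qI_eq, List.take_length]
  have hrev : ∀ i, i ≤ n → qI B.reverse (n - i) = Kc (B.drop i) := by
    intro i hi
    rw [qI_eq, List.take_reverse, Kc_reverse]
    have : B.length - (n - i) = i := by omega
    rw [this]
  -- no two elements of S differ by ≥ 2
  have key : ∀ i ∈ S, ∀ j ∈ S, i + 2 ≤ j → False := by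
    intro i hi j hj hij
    simp only [hS, Finset.mem_filter, Finset.mem_range] at hi hj
    obtain ⟨hi_lt, _, hir⟩ := hi
    obtain ⟨hj_lt, hjq, _⟩ := hj
    have hi_le : i ≤ n := by omega
    have hj_le : j ≤ n := by omega
    rw [hq] at hir hjq
    rw [hrev i hi_le] at hir
    rw [qI_eq] at hjq
    set L := B.take i
    set R := B.drop i
    -- K B ≤ 2 * Kc L * Kc R
    have hsplit : Kc B = Kc L * Kc R + Gc L * Hc R := by
      rw [← Kc_append]; simp [L, R]
    have h1 : Kc B ≤ 2 * (Kc L * Kc R) := by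
      have := Gc_le L
      have := Hc_le R
      nlinarith [Kc_pos L, Kc_pos R]
    -- Kc (take j) ≥ 2 Kc L
    have hdj : B.take j = L ++ (B.drop i).take (j - i) := by
      have hji : j = i + (j - i) := by omega
      conv_lhs => rw [hji]
      exact List.take_add
    have hlen : 2 ≤ ((B.drop i).take (j - i)).length := by
      rw [List.length_take, List.length_drop]
      omega
    have h2 : 2 * Kc L ≤ Kc (B.take j) := by
      rw [hdj]; exact Kc_double hlen
    have h3 : Kc B ≤ Kc (B.take j) * Kc R := by
      calc Kc B ≤ 2 * (Kc L * Kc R) := h1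
        _ = (2 * Kc L) * Kc R := by ring
        _ ≤ Kc (B.take j) * Kc R := Nat.mul_le_mul_right _ h2
    -- but Kc (take j) * Kc R < Kc B
    have h4 : Kc (B.take j) * Kc R < Kc B := by
      by_contra hcon
      push_neg at hcon
      have : (Kc B) ^ 2 ≤ (Kc (B.take j) * Kc R) ^ 2 := Nat.pow_le_pow_left hcon 2
      have hexp : (Kc (B.take j) * Kc R) ^ 2 = (Kc (B.take j))^2 * (Kc R)^2 := by ring
      nlinarith [Kc_pos B]
    omega
  by_cases hempty : S = ∅
  · rw [hempty]; simp
  · have hne : S.Nonempty := Finset.nonempty_iff_ne_empty.mpr hempty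
    set m := S.min' hne with hm
    have hsub : S ⊆ {m, m + 1} := by
      intro j hj
      have h1 : m ≤ j := S.min'_le j hj
      have h2 : ¬ (m + 2 ≤ j) := fun h => key m (S.min'_mem hne) j hj h
      simp only [Finset.mem_insert, Finset.mem_singleton]
      omega
    calc S.card ≤ ({m, m+1} : Finset ℕ).card := Finset.card_le_card hsub
      _ ≤ 2 := by
        apply le_trans (Finset.card_insert_le _ _)
        simp
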